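/- Let 1 ≤ p < ∞ and let Y be a (real or complex) Banach space. If there exists an isomorphic embedding of c₀ into ℓ_p ⊕ Y (i.e. a bounded linear map J : c₀ → ℓ_p ⊕ Y and a constant c > 0 with ‖Jx‖ ≥ c‖x‖ for all x), then there exists an isomorphic embedding of c₀ into Y. -/

import Mathlib

open scoped ENNReal

noncomputable section

namespace Stmt7

open Filter Finset


variable {𝕜 : Type*} [RCLike 𝕜]

/-- A finitely supported element of `c₀`. -/
def fs (f : ℕ → 𝕜) (s : Finset ℕ) (h : ∀ n ∉ s, f n = 0) :
    ZeroAtInftyContinuousMap ℕ 𝕜 where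
  toFun := f
  continuous_toFun := continuous_of_discreteTopology
  zero_at_infty' := by
    rw [cocompact_eq_cofinite]
    refine Filter.Tendsto.congr' ?_ (tendsto_const_nhds (x := (0:𝕜)))
    rw [Filter.eventuallyEq_iff_exists_mem]
    refine ⟨{n | n ∉ s}, ?_, fun n hn => (h n hn).symm⟩
    rw [Filter.mem_cofinite]
    simpa using s.finite_toSet.subset (by intro n; simp)

@[simp] lemma fs_apply (f : ℕ → 𝕜) (s : Finset ℕ) (h : ∀ n ∉ s, f n = 0) (n : ℕ) :
    fs f s h n = f n := rfl

lemma norm_apply_le_c0 (x : ZeroAtInftyContinuousMap ℕ 𝕜) (n : ℕ) : ‖x n‖ ≤ ‖x‖ := by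
  rw [← ZeroAtInftyContinuousMap.norm_toBCF_eq_norm]
  exact x.toBCF.norm_coe_le_norm n

lemma norm_le_c0 {x : ZeroAtInftyContinuousMap ℕ 𝕜} {C : ℝ} (hC : 0 ≤ C)
    (h : ∀ n, ‖x n‖ ≤ C) : ‖x‖ ≤ C := by
  rw [← ZeroAtInftyContinuousMap.norm_toBCF_eq_norm]
  exact (BoundedContinuousFunction.norm_le hC).2 h

/-- delta function -/
def dl (n : ℕ) : ZeroAtInftyContinuousMap ℕ 𝕜 :=
  fs (Pi.single n 1) {n} (by
    intro m hm
    simp only [Finset.mem_singleton] at hm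
    exact Pi.single_eq_of_ne hm 1)

/-- evaluation as an `AddMonoidHom` -/
def evalAM (m : ℕ) : ZeroAtInftyContinuousMap ℕ 𝕜 →+ 𝕜 where
  toFun := fun g => g m
  map_zero' := rfl
  map_add' := fun _ _ => rfl

lemma eq_sum_dl (G : Finset ℕ) (y : ZeroAtInftyContinuousMap ℕ 𝕜)
    (h : ∀ n ∉ G, y n = 0) : y = ∑ n ∈ G, y n • dl n := by
  ext m
  have : (∑ n ∈ G, y n • dl n) m = ∑ n ∈ G, (y n • dl n) m := map_sum (evalAM m : ZeroAtInftyContinuousMap ℕ 𝕜 →+ 𝕜) (fun n => y n • dl n) G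
  rw [this]
  have : ∀ n ∈ G, (y n • dl n) m = if m = n then y n else 0 := by
    intro n _
    rw [ZeroAtInftyContinuousMap.smul_apply]
    have hdl : (dl n : ZeroAtInftyContinuousMap ℕ 𝕜) m = (Pi.single n (1:𝕜) : ℕ → 𝕜) m := rfl
    rw [hdl, Pi.single_apply]
    simp [smul_eq_mul, mul_ite]
  rw [Finset.sum_congr rfl this, Finset.sum_ite_eq]
  by_cases hm : m ∈ G
  · simp [hm]
  · simp [hm, h m hm]



variable {𝕜 : Type*} [RCLike 𝕜]

/-- "sign" of a scalar: unit scalar with `sgn z * z = ‖z‖`. -/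
def sgn (z : 𝕜) : 𝕜 := if z = 0 then 1 else (‖z‖ : 𝕜) / z

lemma norm_sgn_le (z : 𝕜) : ‖sgn z‖ ≤ 1 := by
  unfold sgn
  split
  · simp
  · rename_i hz
    rw [norm_div]
    rw [RCLike.norm_ofReal, abs_norm]
    rw [div_self (by simpa using hz)]

lemma sgn_mul (z : 𝕜) : sgn z * z = (‖z‖ : 𝕜) := by
  unfold sgn
  split
  · rename_i hz; simp [hz]
  · rename_i hz; rw [div_mul_cancel₀ _ hz]

variable (q : ℝ≥0∞) [Fact (1 ≤ q)]

/-- truncation to coordinates `< m`. -/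
def trunc (hq : 0 < q.toReal) (m : ℕ) (v : lp (fun _ : ℕ => 𝕜) q) :
    lp (fun _ : ℕ => 𝕜) q :=
  ⟨fun i => if i < m then v i else 0, by
    show Memℓp _ q
    apply memℓp_gen
    apply summable_of_ne_finset_zero (s := Finset.range m)
    intro i hi
    simp only [Finset.mem_range] at hi
    simp [if_neg hi, Real.zero_rpow hq.ne']⟩

lemma trunc_apply (hq : 0 < q.toReal) (m : ℕ) (v : lp (fun _ : ℕ => 𝕜) q) (i : ℕ) :
    trunc q hq m v i = if i < m then v i else 0 := rfl

lemma norm_rpow_trunc (hq : 0 < q.toReal) (m : ℕ) (v : lp (fun _ : ℕ => 𝕜) q) :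
    ‖trunc q hq m v‖ ^ q.toReal = ∑ i ∈ Finset.range m, ‖v i‖ ^ q.toReal := by
  rw [lp.norm_rpow_eq_tsum hq]
  rw [tsum_eq_sum (s := Finset.range m) (by
    intro i hi
    simp only [Finset.mem_range] at hi
    rw [trunc_apply, if_neg hi]
    simp [Real.zero_rpow hq.ne'])]
  refine Finset.sum_congr rfl fun i hi => ?_
  simp only [Finset.mem_range] at hi
  rw [trunc_apply, if_pos hi]

lemma norm_rpow_sub_trunc (hq : 0 < q.toReal) (m : ℕ) (v : lp (fun _ : ℕ => 𝕜) q) :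
    ‖v - trunc q hq m v‖ ^ q.toReal = ∑' i, ‖v (i + m)‖ ^ q.toReal := by
  rw [lp.norm_rpow_eq_tsum hq]
  have hcoe : ∀ i, (v - trunc q hq m v) i = if i < m then 0 else v i := by
    intro i
    rw [lp.coeFn_sub, Pi.sub_apply, trunc_apply]
    split <;> simp
  have hsum : Summable fun i => ‖(v - trunc q hq m v) i‖ ^ q.toReal :=
    (lp.memℓp _).summable hq
  rw [← Summable.sum_add_tsum_nat_add m hsum]
  have h1 : ∑ i ∈ Finset.range m, ‖(v - trunc q hq m v) i‖ ^ q.toReal = 0 := by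
    apply Finset.sum_eq_zero
    intro i hi
    simp only [Finset.mem_range] at hi
    rw [hcoe, if_pos hi]
    simp [Real.zero_rpow hq.ne']
  rw [h1, zero_add]
  refine tsum_congr fun i => ?_
  rw [hcoe, if_neg (by omega)]

lemma grp_aux {G : Type*} [AddCommGroup G] (A B C : G) : A - (B - C) = C + (A - B) := by
  abel

set_option maxHeartbeats 1000000 in
theorem lemA (q : ℝ≥0∞) [Fact (1 ≤ q)] (hq : 0 < q.toReal)
    (a : ℕ → lp (fun _ : ℕ => 𝕜) q) (M : ℝ)
    (hM : ∀ (F : Finset ℕ) (ε : ℕ → 𝕜), (∀ n, ‖ε n‖ ≤ 1) →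
      ‖∑ n ∈ F, ε n • a n‖ ≤ M)
    {δ : ℝ} (hδ : 0 < δ) :
    ∃ N : ℕ, ∀ F : Finset ℕ, (∀ n ∈ F, N ≤ n) → ∀ ε : ℕ → 𝕜,
      (∀ n, ‖ε n‖ ≤ 1) → ‖∑ n ∈ F, ε n • a n‖ ≤ δ := by
  classical
  have hq0 : q ≠ 0 := by
    intro h
    rw [h] at hq
    simp at hq
  set pt := q.toReal with hpt
  by_contra hcon
  push_neg at hcon
  -- blocks
  have H : ∀ N : ℕ, ∃ P : Finset ℕ × (ℕ → 𝕜), (∀ n ∈ P.1, N ≤ n) ∧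
      (∀ n, ‖P.2 n‖ ≤ 1) ∧ δ < ‖∑ n ∈ P.1, P.2 n • a n‖ := by
    intro N
    obtain ⟨F, h1, ε, h2, h3⟩ := hcon N
    exact ⟨(F, ε), h1, h2, h3⟩
  let Nf : ℕ → ℕ := fun j => Nat.rec 0
    (fun _ N => max N (((H N).choose.1).sup id) + 1) j
  have hNfs : ∀ j, Nf (j+1) = max (Nf j) (((H (Nf j)).choose.1).sup id) + 1 := fun j => rfl
  let F : ℕ → Finset ℕ := fun j => (H (Nf j)).choose.1
  let ε : ℕ → ℕ → 𝕜 := fun j => (H (Nf j)).choose.2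
  let u : ℕ → lp (fun _ : ℕ => 𝕜) q := fun j => ∑ n ∈ F j, ε j n • a n
  have hF : ∀ j, ∀ n ∈ F j, Nf j ≤ n := fun j => (H (Nf j)).choose_spec.1
  have hε : ∀ j n, ‖ε j n‖ ≤ 1 := fun j => (H (Nf j)).choose_spec.2.1
  have hu : ∀ j, δ < ‖u j‖ := fun j => (H (Nf j)).choose_spec.2.2
  have hFlt : ∀ j, ∀ n ∈ F j, n < Nf (j+1) := by
    intro j n hn
    rw [hNfs j]
    have : n ≤ ((H (Nf j)).choose.1).sup id := Finset.le_sup (f := id) hn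
    omega
  have hNfmono : Monotone Nf := by
    apply monotone_nat_of_le_succ
    intro j
    rw [hNfs j]
    omega
  have hdisj : ∀ j j', j < j' → ∀ n ∈ F j, ∀ n' ∈ F j', n < n' := by
    intro j j' hjj' n hn n' hn'
    calc n < Nf (j+1) := hFlt j n hn
    _ ≤ Nf j' := hNfmono hjj'
    _ ≤ n' := hF j' n' hn'
  -- joint bound
  have hjoint : ∀ (G : Finset ℕ) (η : ℕ → 𝕜), (∀ j, ‖η j‖ ≤ 1) →
      ‖∑ j ∈ G, η j • u j‖ ≤ M := by
    intro G η hη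
    have hun : ∀ j ∈ G, ∀ n ∈ F j, ∀ j' ∈ G, n ∈ F j' → j' = j := by
      intro j _ n hn j' _ hn'
      rcases lt_trichotomy j' j with h | h | h
      · exact absurd (hdisj j' j h n hn' n hn) (lt_irrefl n)
      · exact h
      · exact absurd (hdisj j j' h n hn n hn') (lt_irrefl n)
    set ε' : ℕ → 𝕜 := fun n =>
      if h : ∃ j ∈ G, n ∈ F j then η h.choose * ε h.choose n else 0 with hε'def
    have hε'form : ∀ j ∈ G, ∀ n ∈ F j, ε' n = η j * ε j n := by
      intro j hj n hn
      have hex : ∃ j ∈ G, n ∈ F j := ⟨j, hj, hn⟩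
      rw [hε'def]
      simp only [dif_pos hex]
      have := hun j hj n hn hex.choose hex.choose_spec.1 hex.choose_spec.2
      rw [this]
    have hε'le : ∀ n, ‖ε' n‖ ≤ 1 := by
      intro n
      show ‖(if h : ∃ j ∈ G, n ∈ F j then η h.choose * ε h.choose n else 0)‖ ≤ 1
      split
      · rename_i h
        rw [norm_mul]
        calc ‖η h.choose‖ * ‖ε h.choose n‖ ≤ 1 * 1 :=
          mul_le_mul (hη _) (hε _ _) (norm_nonneg _) zero_le_one
        _ = 1 := one_mul 1
      · simp
    have hpd : (↑G : Set ℕ).PairwiseDisjoint F := by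
      intro j hj j' hj' hne
      show Disjoint (F j) (F j')
      rw [Finset.disjoint_left]
      intro n hn hn'
      rcases lt_trichotomy j j' with h | h | h
      · exact absurd (hdisj j j' h n hn n hn') (lt_irrefl n)
      · exact hne h
      · exact absurd (hdisj j' j h n hn' n hn) (lt_irrefl n)
    have key : ∑ j ∈ G, η j • u j = ∑ n ∈ G.biUnion F, ε' n • a n := by
      rw [Finset.sum_biUnion hpd]
      refine Finset.sum_congr rfl fun j hj => ?_
      show η j • ∑ n ∈ F j, ε j n • a n = _
      rw [Finset.smul_sum]
      refine Finset.sum_congr rfl fun n hn => ?_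
      rw [hε'form j hj n hn, smul_smul]
    rw [key]
    exact hM _ _ hε'le
  -- coordinatewise bound and decay
  have hcoord : ∀ (i : ℕ) (G : Finset ℕ), ∑ j ∈ G, ‖u j i‖ ≤ M := by
    intro i G
    have h2 := hjoint G (fun j => sgn (u j i)) (fun j => norm_sgn_le _)
    have h3 : (∑ j ∈ G, (fun j => sgn (u j i)) j • u j) i
        = ((∑ j ∈ G, ‖u j i‖ : ℝ) : 𝕜) := by
      rw [lp.coeFn_sum, Finset.sum_apply]
      push_cast
      refine Finset.sum_congr rfl fun j _ => ?_
      rw [lp.coeFn_smul, Pi.smul_apply, smul_eq_mul, sgn_mul]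
    calc ∑ j ∈ G, ‖u j i‖ = ‖((∑ j ∈ G, ‖u j i‖ : ℝ) : 𝕜)‖ := by
          rw [RCLike.norm_ofReal, abs_of_nonneg (Finset.sum_nonneg fun j _ => norm_nonneg _)]
    _ = ‖(∑ j ∈ G, (fun j => sgn (u j i)) j • u j) i‖ := by rw [h3]
    _ ≤ ‖∑ j ∈ G, (fun j => sgn (u j i)) j • u j‖ := lp.norm_apply_le_norm hq0 _ i
    _ ≤ M := h2
  have hcoord0 : ∀ i : ℕ, Tendsto (fun j => ‖u j i‖) atTop (nhds 0) := by
    intro i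
    have : Summable fun j => ‖u j i‖ :=
      summable_of_sum_range_le (fun _ => norm_nonneg _) (fun n => hcoord i (Finset.range n))
    exact this.tendsto_atTop_zero
  -- head and tail
  have hhead : ∀ m : ℕ, Tendsto (fun j => ∑ i ∈ Finset.range m, ‖u j i‖ ^ pt)
      atTop (nhds 0) := by
    intro m
    have h0 : (0:ℝ) = ∑ _i ∈ Finset.range m, (0:ℝ) := by simp
    rw [h0]
    apply tendsto_finset_sum
    intro i _
    have := (hcoord0 i).rpow_const (p := pt) (Or.inr hq.le)
    simpa [Real.zero_rpow hq.ne'] using this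
  have htail : ∀ j : ℕ, Tendsto (fun m => ∑' i, ‖u j (i + m)‖ ^ pt) atTop (nhds 0) := by
    intro j
    exact tendsto_sum_nat_add fun n => ‖u j n‖ ^ pt
  -- the recursion producing almost-disjoint blocks
  set σ : ℕ → ℝ := fun k => δ/8 * (1/2)^k with hσdef
  have hσpos : ∀ k, 0 < σ k := by
    intro k
    rw [hσdef]
    positivity
  have hσle : ∀ k, σ k ≤ δ/8 := by
    intro k
    rw [hσdef]
    calc δ/8 * (1/2:ℝ)^k ≤ δ/8 * 1 := by
          refine mul_le_mul_of_nonneg_left ?_ (by linarith)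
          exact pow_le_one₀ (by norm_num) (by norm_num)
    _ = δ/8 := mul_one _
  have Hstep : ∀ (k j m : ℕ), ∃ P : ℕ × ℕ, j < P.1 ∧ m ≤ P.2 ∧
      (∑ i ∈ Finset.range m, ‖u P.1 i‖ ^ pt) ≤ σ k ^ pt ∧
      (∑' i, ‖u P.1 (i + P.2)‖ ^ pt) ≤ σ k ^ pt := by
    intro k j m
    have hσp : (0:ℝ) < σ k ^ pt := Real.rpow_pos_of_pos (hσpos k) pt
    have h1 : ∀ᶠ j' in atTop, (∑ i ∈ Finset.range m, ‖u j' i‖ ^ pt) ≤ σ k ^ pt :=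
      (hhead m).eventually (eventually_le_nhds hσp)
    obtain ⟨j', hj1, hj2⟩ := (h1.and (eventually_gt_atTop j)).exists
    have h2 : ∀ᶠ m' in atTop, (∑' i, ‖u j' (i + m')‖ ^ pt) ≤ σ k ^ pt :=
      (htail j').eventually (eventually_le_nhds hσp)
    obtain ⟨m', hm1, hm2⟩ := (h2.and (eventually_ge_atTop m)).exists
    exact ⟨(j', m'), hj2, hm2, hj1, hm1⟩
  let g : ℕ → ℕ × ℕ := fun k => Nat.rec (0, 0) (fun k p => (Hstep k p.1 p.2).choose) k
  let jj : ℕ → ℕ := fun k => (g (k+1)).1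
  let mm : ℕ → ℕ := fun k => (g k).2
  have hspec : ∀ k, (g k).1 < jj k ∧ mm k ≤ mm (k+1) ∧
      (∑ i ∈ Finset.range (mm k), ‖u (jj k) i‖ ^ pt) ≤ σ k ^ pt ∧
      (∑' i, ‖u (jj k) (i + mm (k+1))‖ ^ pt) ≤ σ k ^ pt :=
    fun k => (Hstep k (g k).1 (g k).2).choose_spec
  have hjmono : StrictMono jj := by
    apply strictMono_nat_of_lt_succ
    intro k
    calc jj k = (g (k+1)).1 := rfl
    _ < jj (k+1) := (hspec (k+1)).1
  have hmmono : Monotone mm := monotone_nat_of_le_succ (fun k => (hspec k).2.1)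
  set v : ℕ → lp (fun _ : ℕ => 𝕜) q := fun k => u (jj k) with hvdef
  set w : ℕ → lp (fun _ : ℕ => 𝕜) q :=
    fun k => trunc q hq (mm (k+1)) (v k) - trunc q hq (mm k) (v k) with hwdef
  have hwcoe : ∀ k i, w k i = if mm k ≤ i ∧ i < mm (k+1) then v k i else 0 := by
    intro k i
    show (trunc q hq (mm (k+1)) (v k) - trunc q hq (mm k) (v k)) i = _
    rw [lp.coeFn_sub, Pi.sub_apply, trunc_apply, trunc_apply]
    by_cases h1 : i < mm k
    · have h2 : i < mm (k+1) := lt_of_lt_of_le h1 ((hspec k).2.1)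
      rw [if_pos h2, if_pos h1, if_neg (by omega)]
      simp
    · rw [if_neg h1]
      by_cases h2 : i < mm (k+1)
      · rw [if_pos h2, if_pos ⟨by omega, h2⟩]
        simp
      · rw [if_neg h2, if_neg (by omega)]
        simp
  have herr : ∀ k, ‖v k - w k‖ ≤ 2 * σ k := by
    intro k
    have hvw : v k - w k =
        trunc q hq (mm k) (v k) + (v k - trunc q hq (mm (k+1)) (v k)) := by
      show v k - (trunc q hq (mm (k+1)) (v k) - trunc q hq (mm k) (v k)) = _
      exact grp_aux _ _ _
    rw [hvw]
    refine (norm_add_le _ _).trans ?_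
    have h1 : ‖trunc q hq (mm k) (v k)‖ ≤ σ k := by
      rw [← Real.rpow_le_rpow_iff (norm_nonneg _) (hσpos k).le hq, norm_rpow_trunc]
      exact (hspec k).2.2.1
    have h2 : ‖v k - trunc q hq (mm (k+1)) (v k)‖ ≤ σ k := by
      rw [← Real.rpow_le_rpow_iff (norm_nonneg _) (hσpos k).le hq, norm_rpow_sub_trunc]
      exact (hspec k).2.2.2
    linarith
  have hwlb : ∀ k, δ/2 ≤ ‖w k‖ := by
    intro k
    have h1 : ‖v k‖ - ‖w k‖ ≤ ‖v k - w k‖ := norm_sub_norm_le _ _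
    have h2 := hu (jj k)
    have h3 := herr k
    have h4 := hσle k
    have : δ < ‖v k‖ := h2
    linarith
  have hwsupp : ∀ k i, w k i ≠ 0 → mm k ≤ i ∧ i < mm (k+1) := by
    intro k i h
    rw [hwcoe k i] at h
    by_contra hc
    rw [if_neg hc] at h
    exact h rfl
  have huniq : ∀ (i k k' : ℕ), w k i ≠ 0 → w k' i ≠ 0 → k = k' := by
    intro i k k' h h'
    obtain ⟨h1, h2⟩ := hwsupp k i h
    obtain ⟨h1', h2'⟩ := hwsupp k' i h'
    by_contra hne
    rcases lt_or_gt_of_ne hne with hlt | hlt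
    · have : mm (k+1) ≤ mm k' := hmmono hlt
      omega
    · have : mm (k'+1) ≤ mm k := hmmono hlt
      omega
  have hkey : ∀ K : ℕ, ∑ k ∈ Finset.range K, ‖w k‖ ^ pt
      = ‖∑ k ∈ Finset.range K, w k‖ ^ pt := by
    intro K
    have hsw : ∀ k, Summable fun i => ‖w k i‖ ^ pt := fun k => (lp.memℓp _).summable hq
    calc ∑ k ∈ Finset.range K, ‖w k‖ ^ pt
        = ∑ k ∈ Finset.range K, ∑' i, ‖w k i‖ ^ pt :=
          Finset.sum_congr rfl fun k _ => lp.norm_rpow_eq_tsum hq (w k)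
    _ = ∑' i, ∑ k ∈ Finset.range K, ‖w k i‖ ^ pt := (Summable.tsum_finsetSum (fun k _ => hsw k)).symm
    _ = ∑' i, ‖(∑ k ∈ Finset.range K, w k) i‖ ^ pt := by
        refine tsum_congr fun i => ?_
        rw [lp.coeFn_sum, Finset.sum_apply]
        by_cases hex : ∃ k ∈ Finset.range K, w k i ≠ 0
        · obtain ⟨k0, hk0, hk0ne⟩ := hex
          have e1 : ∑ k ∈ Finset.range K, w k i = w k0 i := by
            refine Finset.sum_eq_single_of_mem k0 hk0 (fun k _ hne => ?_)
            by_contra hz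
            exact hne (huniq i k k0 hz hk0ne)
          have e2 : ∑ k ∈ Finset.range K, ‖w k i‖ ^ pt = ‖w k0 i‖ ^ pt := by
            refine Finset.sum_eq_single_of_mem k0 hk0 (fun k _ hne => ?_)
            have hz : w k i = 0 := by
              by_contra hz
              exact hne (huniq i k k0 hz hk0ne)
            rw [hz]
            simp [Real.zero_rpow hq.ne']
          rw [e1, e2]
        · push_neg at hex
          have e1 : ∑ k ∈ Finset.range K, w k i = 0 :=
            Finset.sum_eq_zero fun k hk => hex k hk
          have e2 : ∑ k ∈ Finset.range K, ‖w k i‖ ^ pt = 0 := by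
            refine Finset.sum_eq_zero fun k hk => ?_
            rw [hex k hk]
            simp [Real.zero_rpow hq.ne']
          rw [e1, e2]
          simp [Real.zero_rpow hq.ne']
    _ = ‖∑ k ∈ Finset.range K, w k‖ ^ pt := (lp.norm_rpow_eq_tsum hq _).symm
  have hsumv : ∀ K : ℕ, ‖∑ k ∈ Finset.range K, v k‖ ≤ M := by
    intro K
    have himg : ∑ k ∈ Finset.range K, v k = ∑ j ∈ (Finset.range K).image jj, u j := by
      rw [Finset.sum_image (fun x _ y _ h => hjmono.injective h)]
    rw [himg]
    have := hjoint ((Finset.range K).image jj) (fun _ => 1) (fun _ => by simp)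
    simpa using this
  have herrsum : ∀ K : ℕ, ∑ k ∈ Finset.range K, ‖v k - w k‖ ≤ δ/2 := by
    intro K
    calc ∑ k ∈ Finset.range K, ‖v k - w k‖ ≤ ∑ k ∈ Finset.range K, 2 * σ k :=
        Finset.sum_le_sum fun k _ => herr k
    _ = (δ/4) * ∑ k ∈ Finset.range K, (1/2:ℝ)^k := by
        rw [Finset.mul_sum]
        refine Finset.sum_congr rfl fun k _ => ?_
        rw [hσdef]
        ring
    _ ≤ (δ/4) * 2 := mul_le_mul_of_nonneg_left (sum_geometric_two_le K) (by linarith)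
    _ = δ/2 := by ring
  have hWle : ∀ K : ℕ, ‖∑ k ∈ Finset.range K, w k‖ ≤ M + δ/2 := by
    intro K
    have hsplit : ∑ k ∈ Finset.range K, w k
        = ∑ k ∈ Finset.range K, v k - ∑ k ∈ Finset.range K, (v k - w k) := by
      rw [← Finset.sum_sub_distrib]
      simp
    rw [hsplit]
    refine (norm_sub_le _ _).trans ?_
    have h2 : ‖∑ k ∈ Finset.range K, (v k - w k)‖ ≤ δ/2 :=
      (norm_sum_le _ _).trans (herrsum K)
    have := hsumv K
    linarith
  have hfin : ∀ K : ℕ, (K : ℝ) * (δ/2) ^ pt ≤ (M + δ/2) ^ pt := by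
    intro K
    have h1 : (K:ℝ) * (δ/2)^pt ≤ ∑ k ∈ Finset.range K, ‖w k‖ ^ pt := by
      calc (K:ℝ) * (δ/2)^pt = ∑ _k ∈ Finset.range K, (δ/2)^pt := by
            rw [Finset.sum_const, Finset.card_range, nsmul_eq_mul]
      _ ≤ _ := Finset.sum_le_sum fun k _ =>
            Real.rpow_le_rpow (by linarith) (hwlb k) hq.le
    have h2 : ‖∑ k ∈ Finset.range K, w k‖ ^ pt ≤ (M + δ/2) ^ pt :=
      Real.rpow_le_rpow (norm_nonneg _) (hWle K) hq.le
    rw [hkey K] at h1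
    linarith
  obtain ⟨K, hK⟩ := exists_nat_gt ((M + δ/2) ^ pt / (δ/2) ^ pt)
  have hp2 : (0:ℝ) < (δ/2)^pt := Real.rpow_pos_of_pos (by linarith) pt
  have hfinK := hfin K
  rw [div_lt_iff₀ hp2] at hK
  linarith


variable {𝕜 : Type*} [RCLike 𝕜]

variable (𝕜) in
def P1 (q : ℝ≥0∞) [Fact (1 ≤ q)] (Y : Type*) [NormedAddCommGroup Y] [NormedSpace 𝕜 Y] :
    WithLp 1 ((lp (fun _ : ℕ => 𝕜) q) × Y) →L[𝕜] lp (fun _ : ℕ => 𝕜) q :=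
  (ContinuousLinearMap.fst 𝕜 (lp (fun _ : ℕ => 𝕜) q) Y).comp
    (WithLp.prodContinuousLinearEquiv 1 𝕜 (lp (fun _ : ℕ => 𝕜) q) Y).toContinuousLinearMap

variable (𝕜) in
def P2 (q : ℝ≥0∞) [Fact (1 ≤ q)] (Y : Type*) [NormedAddCommGroup Y] [NormedSpace 𝕜 Y] :
    WithLp 1 ((lp (fun _ : ℕ => 𝕜) q) × Y) →L[𝕜] Y :=
  (ContinuousLinearMap.snd 𝕜 (lp (fun _ : ℕ => 𝕜) q) Y).comp
    (WithLp.prodContinuousLinearEquiv 1 𝕜 (lp (fun _ : ℕ => 𝕜) q) Y).toContinuousLinearMap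

lemma wnorm (q : ℝ≥0∞) [Fact (1 ≤ q)] (Y : Type*) [NormedAddCommGroup Y] [NormedSpace 𝕜 Y]
    (x : WithLp 1 ((lp (fun _ : ℕ => 𝕜) q) × Y)) :
    ‖x‖ = ‖P1 𝕜 q Y x‖ + ‖P2 𝕜 q Y x‖ := by
  rw [WithLp.prod_norm_eq_add (by norm_num)]
  simp [P1, P2]


variable {𝕜 : Type*} [RCLike 𝕜]

def shiftFun (N : ℕ) (x : ZeroAtInftyContinuousMap ℕ 𝕜) : ZeroAtInftyContinuousMap ℕ 𝕜 where
  toFun := fun m => if N ≤ m then x (m - N) else 0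
  continuous_toFun := continuous_of_discreteTopology
  zero_at_infty' := by
    rw [cocompact_eq_cofinite, Nat.cofinite_eq_atTop]
    have hx : Tendsto x (cocompact ℕ) (nhds 0) := x.zero_at_infty'
    rw [cocompact_eq_cofinite, Nat.cofinite_eq_atTop] at hx
    have h1 : Tendsto (fun m : ℕ => x (m - N)) atTop (nhds 0) :=
      hx.comp (tendsto_sub_atTop_nat N)
    refine h1.congr' ?_
    filter_upwards [eventually_ge_atTop N] with m hm
    rw [if_pos hm]

lemma shiftFun_apply (N : ℕ) (x : ZeroAtInftyContinuousMap ℕ 𝕜) (m : ℕ) :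
    shiftFun N x m = if N ≤ m then x (m - N) else 0 := rfl

lemma norm_apply_le_c0' (x : ZeroAtInftyContinuousMap ℕ 𝕜) (n : ℕ) : ‖x n‖ ≤ ‖x‖ := by
  rw [← ZeroAtInftyContinuousMap.norm_toBCF_eq_norm]
  exact x.toBCF.norm_coe_le_norm n

lemma norm_le_c0' {x : ZeroAtInftyContinuousMap ℕ 𝕜} {C : ℝ} (hC : 0 ≤ C)
    (h : ∀ n, ‖x n‖ ≤ C) : ‖x‖ ≤ C := by
  rw [← ZeroAtInftyContinuousMap.norm_toBCF_eq_norm]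
  exact (BoundedContinuousFunction.norm_le hC).2 h

lemma shift_norm (N : ℕ) (x : ZeroAtInftyContinuousMap ℕ 𝕜) : ‖shiftFun N x‖ = ‖x‖ := by
  apply le_antisymm
  · refine norm_le_c0' (norm_nonneg x) fun m => ?_
    rw [shiftFun_apply]
    split
    · exact norm_apply_le_c0' x _
    · simp
  · refine norm_le_c0' (norm_nonneg _) fun n => ?_
    have h : x n = shiftFun N x (n + N) := by
      rw [shiftFun_apply, if_pos (Nat.le_add_left N n), Nat.add_sub_cancel]
    rw [h]
    exact norm_apply_le_c0' _ _

variable (𝕜) in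
def shiftL (N : ℕ) : ZeroAtInftyContinuousMap ℕ 𝕜 →L[𝕜] ZeroAtInftyContinuousMap ℕ 𝕜 :=
  LinearMap.mkContinuous
    { toFun := shiftFun N
      map_add' := by
        intro x y
        ext m
        show (if N ≤ m then (x + y) (m - N) else 0) = shiftFun N x m + shiftFun N y m
        rw [shiftFun_apply, shiftFun_apply]
        split
        · rw [ZeroAtInftyContinuousMap.add_apply]
        · simp
      map_smul' := by
        intro r x
        ext m
        show (if N ≤ m then (r • x) (m - N) else 0) = r • shiftFun N x m
        rw [shiftFun_apply]
        split
        · rw [ZeroAtInftyContinuousMap.smul_apply]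
        · simp }
    1 (fun x => by rw [one_mul]; exact le_of_eq (shift_norm N x))

lemma shiftL_apply (N : ℕ) (x : ZeroAtInftyContinuousMap ℕ 𝕜) (m : ℕ) :
    shiftL 𝕜 N x m = if N ≤ m then x (m - N) else 0 := rfl

lemma shiftL_norm (N : ℕ) (x : ZeroAtInftyContinuousMap ℕ 𝕜) : ‖shiftL 𝕜 N x‖ = ‖x‖ :=
  shift_norm N x


end Stmt7

open scoped ENNReal

open Filter in
set_option maxHeartbeats 1000000 in
/-- if `1 ≤ p < ∞` and `c₀` embeds isomorphically into `ℓ_p ⊕₁ Y`,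
then `c₀` embeds isomorphically into `Y`. -/
theorem statement7 (𝕜 : Type*) [RCLike 𝕜] (p : ℝ) (hp : 1 ≤ p)
    [Fact (1 ≤ ENNReal.ofReal p)]
    (Y : Type*) [NormedAddCommGroup Y] [NormedSpace 𝕜 Y] [CompleteSpace Y]
    (hembed : ∃ (J : ZeroAtInftyContinuousMap ℕ 𝕜 →L[𝕜]
        WithLp 1 ((lp (fun _ : ℕ => 𝕜) (ENNReal.ofReal p)) × Y)) (c : ℝ),
      0 < c ∧ ∀ x, c * ‖x‖ ≤ ‖J x‖) :
    ∃ (J' : ZeroAtInftyContinuousMap ℕ 𝕜 →L[𝕜] Y) (c' : ℝ),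
      0 < c' ∧ ∀ x, c' * ‖x‖ ≤ ‖J' x‖ := by
  classical
  obtain ⟨J, c, hc, hJ⟩ := hembed
  set q := ENNReal.ofReal p with hqdef
  have hq : 0 < q.toReal := by
    rw [hqdef, ENNReal.toReal_ofReal (by linarith)]
    linarith
  set a : ℕ → lp (fun _ : ℕ => 𝕜) q := fun n => (Stmt7.P1 𝕜 q Y) (J (Stmt7.dl n)) with hadef
  have hMJ : ∀ (F : Finset ℕ) (ε : ℕ → 𝕜), (∀ n, ‖ε n‖ ≤ 1) →
      ‖∑ n ∈ F, ε n • a n‖ ≤ ‖J‖ := by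
    intro F ε hε
    set y := Stmt7.fs (fun n => if n ∈ F then ε n else 0) F (fun n hn => if_neg hn) with hydef
    have hyval : ∀ n, y n = if n ∈ F then ε n else 0 := fun n => rfl
    have hy1 : ‖y‖ ≤ 1 := by
      refine Stmt7.norm_le_c0 zero_le_one fun n => ?_
      rw [hyval]
      split
      · exact hε n
      · simp
    have hyd : y = ∑ n ∈ F, y n • Stmt7.dl n :=
      Stmt7.eq_sum_dl F y (fun n hn => by rw [hyval, if_neg hn])
    have key : (Stmt7.P1 𝕜 q Y) (J y) = ∑ n ∈ F, ε n • a n := by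
      conv_lhs => rw [hyd]
      rw [map_sum, map_sum]
      simp only [map_smul]
      refine Finset.sum_congr rfl fun n hn => ?_
      rw [hyval, if_pos hn, hadef]
    have hb : ‖(Stmt7.P1 𝕜 q Y) (J y)‖ ≤ ‖J y‖ := by
      rw [Stmt7.wnorm q Y (J y)]
      have := norm_nonneg ((Stmt7.P2 𝕜 q Y) (J y))
      linarith
    rw [← key]
    calc ‖(Stmt7.P1 𝕜 q Y) (J y)‖ ≤ ‖J y‖ := hb
    _ ≤ ‖J‖ * ‖y‖ := J.le_opNorm y
    _ ≤ ‖J‖ * 1 := mul_le_mul_of_nonneg_left hy1 (norm_nonneg J)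
    _ = ‖J‖ := mul_one _
  obtain ⟨N, hN⟩ := Stmt7.lemA q hq a ‖J‖ hMJ (half_pos hc)
  set J' := (Stmt7.P2 𝕜 q Y).comp (J.comp (Stmt7.shiftL 𝕜 N)) with hJ'def
  refine ⟨J', c/2, half_pos hc, ?_⟩
  have main : ∀ x : ZeroAtInftyContinuousMap ℕ 𝕜, (∃ s : Finset ℕ, ∀ n ∉ s, x n = 0) →
      c/2 * ‖x‖ ≤ ‖J' x‖ := by
    rintro x ⟨s, hs⟩
    have hynorm : ‖Stmt7.shiftL 𝕜 N x‖ = ‖x‖ := Stmt7.shiftL_norm N x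
    set y := Stmt7.shiftL 𝕜 N x with hydef2
    set G := s.image (· + N) with hGdef
    have hGsupp : ∀ n ∉ G, y n = 0 := by
      intro n hn
      rw [hydef2, Stmt7.shiftL_apply]
      split
      · rename_i h
        by_cases hx : n - N ∈ s
        · exact absurd (Finset.mem_image.2 ⟨n - N, hx, by omega⟩) hn
        · exact hs _ hx
      · rfl
    have hGge : ∀ n ∈ G, N ≤ n := by
      intro n hn
      rw [hGdef, Finset.mem_image] at hn
      obtain ⟨m, _, rfl⟩ := hn
      omega
    have hdecomp : (Stmt7.P1 𝕜 q Y) (J y) = ∑ n ∈ G, y n • a n := by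
      conv_lhs => rw [Stmt7.eq_sum_dl G y hGsupp]
      rw [map_sum, map_sum]
      simp only [map_smul]
      rfl
    have hJ'x : J' x = (Stmt7.P2 𝕜 q Y) (J y) := rfl
    by_cases hx0 : ‖x‖ = 0
    · have hxz : x = 0 := norm_eq_zero.mp hx0
      rw [hxz]
      simp
    have hxpos : 0 < ‖x‖ := lt_of_le_of_ne (norm_nonneg x) (Ne.symm hx0)
    have hcoe : ((‖x‖ : ℝ) : 𝕜) ≠ 0 := by
      simp only [ne_eq, RCLike.ofReal_eq_zero]
      exact hx0
    have h1 : ‖((‖x‖ : ℝ) : 𝕜)‖ = ‖x‖ := by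
      rw [RCLike.norm_ofReal, abs_of_nonneg (norm_nonneg x)]
    have hP1small : ‖(Stmt7.P1 𝕜 q Y) (J y)‖ ≤ c/2 * ‖x‖ := by
      rw [hdecomp]
      have hsc : ∑ n ∈ G, y n • a n
          = ((‖x‖ : ℝ) : 𝕜) • ∑ n ∈ G, ((((‖x‖ : ℝ) : 𝕜))⁻¹ * y n) • a n := by
        rw [Finset.smul_sum]
        refine Finset.sum_congr rfl fun n _ => ?_
        rw [smul_smul, ← mul_assoc, mul_inv_cancel₀ hcoe, one_mul]
      rw [hsc, norm_smul, h1]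
      have h2 : ‖∑ n ∈ G, ((((‖x‖ : ℝ) : 𝕜))⁻¹ * y n) • a n‖ ≤ c/2 := by
        apply hN G hGge
        intro n
        rw [norm_mul, norm_inv, h1]
        have h3 : ‖y n‖ ≤ ‖x‖ := by
          calc ‖y n‖ ≤ ‖y‖ := Stmt7.norm_apply_le_c0 y n
          _ = ‖x‖ := hynorm
        calc ‖x‖⁻¹ * ‖y n‖ ≤ ‖x‖⁻¹ * ‖x‖ :=
            mul_le_mul_of_nonneg_left h3 (inv_nonneg.2 (norm_nonneg x))
        _ = 1 := inv_mul_cancel₀ hx0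
      calc ‖x‖ * ‖∑ n ∈ G, ((((‖x‖ : ℝ) : 𝕜))⁻¹ * y n) • a n‖ ≤ ‖x‖ * (c/2) :=
          mul_le_mul_of_nonneg_left h2 (norm_nonneg x)
      _ = c/2 * ‖x‖ := mul_comm _ _
    have hlow : c * ‖x‖ ≤ ‖J y‖ := by
      rw [← hynorm]
      exact hJ y
    have hsum : ‖J y‖ = ‖(Stmt7.P1 𝕜 q Y) (J y)‖ + ‖(Stmt7.P2 𝕜 q Y) (J y)‖ :=
      Stmt7.wnorm q Y (J y)
    rw [hJ'x]
    linarith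
  intro x
  have hclosed : IsClosed {z : ZeroAtInftyContinuousMap ℕ 𝕜 | c/2 * ‖z‖ ≤ ‖J' z‖} :=
    isClosed_le (continuous_const.mul continuous_norm) (J'.continuous.norm)
  have hdense : x ∈ closure {z : ZeroAtInftyContinuousMap ℕ 𝕜 |
      ∃ s : Finset ℕ, ∀ n ∉ s, z n = 0} := by
    rw [Metric.mem_closure_iff]
    intro ε hε
    have hx : Tendsto x (cocompact ℕ) (nhds 0) := x.zero_at_infty'
    rw [cocompact_eq_cofinite] at hx
    have hev : ∀ᶠ n in Filter.cofinite, ‖x n‖ < ε/2 := by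
      have := Metric.tendsto_nhds.mp hx (ε/2) (by linarith)
      simpa [dist_zero_right] using this
    rw [Filter.eventually_cofinite] at hev
    refine ⟨Stmt7.fs (fun n => if n ∈ hev.toFinset then x n else 0) hev.toFinset
      (fun n hn => if_neg hn), ⟨hev.toFinset, fun n hn => if_neg hn⟩, ?_⟩
    rw [dist_eq_norm]
    have hle : ‖x - Stmt7.fs (fun n => if n ∈ hev.toFinset then x n else 0) hev.toFinset
        (fun n hn => if_neg hn)‖ ≤ ε/2 := by
      refine Stmt7.norm_le_c0 (by linarith) fun n => ?_
      rw [ZeroAtInftyContinuousMap.sub_apply, Stmt7.fs_apply]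
      by_cases h : n ∈ hev.toFinset
      · rw [if_pos h]
        simp only [sub_self, norm_zero]
        linarith
      · rw [if_neg h, sub_zero]
        rw [Set.Finite.mem_toFinset] at h
        have : ‖x n‖ < ε/2 := not_not.mp h
        linarith
    linarith
  exact (closure_minimal (fun z hz => main z hz) hclosed) hdense

end
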